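/- arXiv:1604.04586 — 2 statements merged into one kernel-verified Lean document; each statement's English description precedes it below -/
import Mathlib

section
/- With the setup of the robust closure model (q̇ = F̃(q) + μ_cl D q + μ_nl f̃(q) diag(d_{ii}) q, ‖F̃(q)‖ ≤ f̃(q), D symmetric negative definite, μ_cl, μ_nl > 0), if q ∈ ℝ^r satisfies ‖q‖ > -1/(μ_nl max_i d_{ii}) and f̃(q) > 0, then the right-hand side satisfies q*(F̃(q) + μ_cl D q + μ_nl f̃(q) diag(d_{ii}) q) < 0, i.e., the energy V(q) = ½‖q‖² is strictly decreasing outside a ball. -/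
open scoped RealInnerProductSpace

lemma diag_inner {r : ℕ} (d : Fin r → ℝ) (q : EuclideanSpace ℝ (Fin r)) :
    ⟪q, Matrix.toEuclideanLin (Matrix.diagonal d) q⟫ = ∑ i, d i * (q i * q i) := by
  simp [Matrix.toEuclideanLin_apply, PiLp.inner_apply, Matrix.mulVec_diagonal]
  ring_nf

/-- for the robust closure model, if `‖q‖ > -1/(μ_nl max_i d_ii)` and
`f̃(q) > 0`, then `qᵀ(F̃(q) + μ_cl D q + μ_nl f̃(q) diag(d_ii) q) < 0`, i.e., the energy
`V(q) = ½‖q‖²` is strictly decreasing outside a ball. -/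
theorem energy_strictly_decreasing_outside_ball {r : ℕ} (hr : 0 < r)
    (D : Matrix (Fin r) (Fin r) ℝ) (hherm : D.IsHermitian)
    (hneg : ∀ p : EuclideanSpace ℝ (Fin r), p ≠ 0 → ⟪p, Matrix.toEuclideanLin D p⟫ < 0)
    (F : EuclideanSpace ℝ (Fin r) → EuclideanSpace ℝ (Fin r))
    (f : EuclideanSpace ℝ (Fin r) → ℝ)
    (hF : ∀ p, ‖F p‖ ≤ f p)
    (μcl μnl : ℝ) (hμcl : 0 ≤ μcl) (hμnl : 0 < μnl)
    (q : EuclideanSpace ℝ (Fin r))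
    (hq : ‖q‖ > -1 / (μnl * Finset.univ.sup' ⟨⟨0, hr⟩, Finset.mem_univ _⟩ fun i => D i i))
    (hfq : 0 < f q) :
    ⟪q, F q + μcl • Matrix.toEuclideanLin D q +
        (μnl * f q) • Matrix.toEuclideanLin (Matrix.diagonal fun i => D i i) q⟫ < 0 := by
  set M : ℝ := Finset.univ.sup' ⟨⟨0, hr⟩, Finset.mem_univ _⟩ fun i => D i i with hMdef
  -- diagonal entries are negative
  have hdi : ∀ i, D i i < 0 := by
    intro i
    have h := hneg (EuclideanSpace.single i 1) (by
      intro h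
      have := congrFun (congrArg (WithLp.equiv 2 _) h) i
      simp at this)
    have heq : ⟪(EuclideanSpace.single i 1 : EuclideanSpace ℝ (Fin r)),
        Matrix.toEuclideanLin D (EuclideanSpace.single i 1)⟫ = D i i := by
      simp [Matrix.toEuclideanLin_apply, PiLp.inner_apply, RCLike.inner_apply,
        EuclideanSpace.single_apply, Matrix.mulVec_single]
    rwa [heq] at h
  have hM : M < 0 := by
    rw [hMdef]
    exact (Finset.sup'_lt_iff _).2 fun i _ => hdi i
  have hμM : μnl * M < 0 := mul_neg_of_pos_of_neg hμnl hM
  have hq0 : 0 < ‖q‖ := lt_trans (div_pos_of_neg_of_neg (by norm_num) hμM) hq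
  have hqne : q ≠ 0 := fun h => by simp [h] at hq0
  -- key: μnl * M * ‖q‖ < -1
  have hkey : μnl * M * ‖q‖ < -1 := by
    have := (div_lt_iff_of_neg hμM).mp (by rwa [neg_div] at hq)
    linarith [this]
  have h1 : ⟪q, F q⟫ ≤ ‖q‖ * f q :=
    le_trans (real_inner_le_norm q (F q)) (by
      have := hF q
      nlinarith [norm_nonneg q])
  have h2 : ⟪q, Matrix.toEuclideanLin D q⟫ < 0 := hneg q hqne
  have h3 : ⟪q, Matrix.toEuclideanLin (Matrix.diagonal fun i => D i i) q⟫ ≤ M * ‖q‖ ^ 2 := by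
    rw [diag_inner]
    have hnormsq : ‖q‖ ^ 2 = ∑ i, q i * q i := by
      rw [← real_inner_self_eq_norm_sq, PiLp.inner_apply]
      simp [RCLike.inner_apply]
      exact Finset.sum_congr rfl fun i _ => sq _
    rw [hnormsq, Finset.mul_sum]
    apply Finset.sum_le_sum
    intro i _
    have hle : D i i ≤ M := by
      rw [hMdef]; exact Finset.le_sup' (fun j => D j j) (Finset.mem_univ i)
    nlinarith [mul_self_nonneg (q i)]
  rw [inner_add_right, inner_add_right, real_inner_smul_right, real_inner_smul_right]
  have hbound : ‖q‖ * f q + (μnl * f q) * (M * ‖q‖ ^ 2) < 0 := by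
    have : ‖q‖ * f q + (μnl * f q) * (M * ‖q‖ ^ 2)
        = (f q * ‖q‖) * (1 + μnl * M * ‖q‖) := by ring
    rw [this]
    apply mul_neg_of_pos_of_neg (by positivity)
    linarith
  have h2' : μcl * ⟪q, Matrix.toEuclideanLin D q⟫ ≤ 0 :=
    mul_nonpos_of_nonneg_of_nonpos hμcl h2.le
  have h3' : (μnl * f q) * ⟪q, Matrix.toEuclideanLin (Matrix.diagonal fun i => D i i) q⟫
      ≤ (μnl * f q) * (M * ‖q‖ ^ 2) :=
    mul_le_mul_of_nonneg_left h3 (by positivity)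
  linarith
end

section
/- For the Boussinesq POD-ROM with uncertain quadratic term F̃(q) = [(C + ΔC)q]q where ‖C + ΔC‖_F ≤ c_max, negative definite symmetric D, and closure model H(q) = μ_nl c_max ‖q‖² diag(d_{11},...,d_{rr}) q with μ_nl > 0, μ_cl > 0: every q with ‖q‖ > 1/(-μ_nl max_i d_{ii}) satisfies q*(F̃(q) + μ_cl D q + H(q)) < 0. -/
open scoped RealInnerProductSpace

set_option maxHeartbeats 1000000 in
/-- for the Boussinesq POD-ROM with uncertain quadratic term
`F̃(q) = [(C+ΔC)q]q` (with `‖C+ΔC‖_F ≤ c_max`), symmetric negative definite `D`, and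
closure model `H(q) = μ_nl c_max ‖q‖² diag(d_ii) q`, every `q` with
`‖q‖ > 1/(-μ_nl max_i d_ii)` satisfies `qᵀ(F̃(q) + μ_cl D q + H(q)) < 0`. -/
theorem boussinesq_closure_energy_decrease {r : ℕ} (hr : 0 < r)
    (D : Matrix (Fin r) (Fin r) ℝ) (hherm : D.IsHermitian)
    (hneg : ∀ p : EuclideanSpace ℝ (Fin r), p ≠ 0 → ⟪p, Matrix.toEuclideanLin D p⟫ < 0)
    (c : Fin r → Fin r → Fin r → ℝ) (cmax : ℝ) (hcmax : 0 < cmax)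
    (hC : Real.sqrt (∑ i, ∑ j, ∑ k, (c i j k) ^ 2) ≤ cmax)
    (μcl μnl : ℝ) (hμcl : 0 < μcl) (hμnl : 0 < μnl)
    (q : EuclideanSpace ℝ (Fin r))
    (hq : ‖q‖ > 1 / (-(μnl * Finset.univ.sup' ⟨⟨0, hr⟩, Finset.mem_univ _⟩ fun i => D i i))) :
    ⟪q, (WithLp.equiv 2 (Fin r → ℝ)).symm (fun i => ∑ j, ∑ k, c i j k * q j * q k) +
        μcl • Matrix.toEuclideanLin D q +
        (μnl * cmax * ‖q‖ ^ 2) • Matrix.toEuclideanLin (Matrix.diagonal fun i => D i i) q⟫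
      < 0 := by
  set dmax : ℝ := Finset.univ.sup' ⟨⟨0, hr⟩, Finset.mem_univ _⟩ fun i => D i i with hdmax
  -- each diagonal entry is negative
  have hdiag : ∀ i : Fin r, D i i < 0 := by
    intro i
    have hsingle : (EuclideanSpace.single i (1:ℝ)) ≠ 0 := by
      intro h
      have : (EuclideanSpace.single i (1:ℝ)) i = 0 := by rw [h]; rfl
      simp at this
    have := hneg (EuclideanSpace.single i (1:ℝ)) hsingle
    have hval : ⟪EuclideanSpace.single i (1:ℝ),
        Matrix.toEuclideanLin D (EuclideanSpace.single i (1:ℝ))⟫ = D i i := by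
      simp [PiLp.inner_apply, Matrix.toEuclideanLin_apply, Matrix.mulVec, dotProduct,
        EuclideanSpace.single_apply, mul_ite, ite_mul, Finset.sum_ite_eq, Finset.sum_ite_eq']
    rw [hval] at this
    exact this
  have hdmaxneg : dmax < 0 := by
    rw [hdmax]
    exact (Finset.sup'_lt_iff _).mpr fun i _ => hdiag i
  have hpos : 0 < -(μnl * dmax) := by nlinarith
  have hqnorm : 0 < ‖q‖ := lt_trans (by positivity) hq
  have hq0 : q ≠ 0 := by
    intro h; rw [h] at hqnorm; simp at hqnorm
  -- the three terms
  set F : EuclideanSpace ℝ (Fin r) :=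
    (WithLp.equiv 2 (Fin r → ℝ)).symm (fun i => ∑ j, ∑ k, c i j k * q j * q k) with hF
  have hS : ∑ i, q i ^ 2 = ‖q‖ ^ 2 := by
    rw [EuclideanSpace.norm_eq, Real.sq_sqrt (by positivity)]
    simp [Real.norm_eq_abs, sq_abs]
  -- bound on the quadratic term
  have hFnorm : ‖F‖ ≤ cmax * ‖q‖ ^ 2 := by
    have hsum : ∑ i, ∑ j, ∑ k, (c i j k) ^ 2 ≤ cmax ^ 2 := by
      have h1 : (0:ℝ) ≤ ∑ i, ∑ j, ∑ k, (c i j k) ^ 2 := by positivity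
      nlinarith [Real.sq_sqrt h1, Real.sqrt_nonneg (∑ i, ∑ j, ∑ k, (c i j k) ^ 2)]
    have hFi : ∀ i, (∑ j, ∑ k, c i j k * q j * q k) ^ 2 ≤
        (∑ j, ∑ k, (c i j k) ^ 2) * (‖q‖ ^ 2) ^ 2 := by
      intro i
      have := Finset.sum_mul_sq_le_sq_mul_sq (Finset.univ ×ˢ Finset.univ)
        (fun p : Fin r × Fin r => c i p.1 p.2) (fun p : Fin r × Fin r => q p.1 * q p.2)
      rw [Finset.sum_product, Finset.sum_product, Finset.sum_product] at this
      have e1 : ∑ j, ∑ k, c i j k * q j * q k = ∑ j, ∑ k, c i j k * (q j * q k) := by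
        simp [mul_assoc]
      have e2 : ∑ j, ∑ k, (q j * q k) ^ 2 = (‖q‖ ^ 2) ^ 2 := by
        rw [← hS]
        simp_rw [mul_pow, ← Finset.mul_sum, ← Finset.sum_mul]
        rw [sq]
      rw [e1]
      calc (∑ j, ∑ k, c i j k * (q j * q k)) ^ 2
          ≤ (∑ j, ∑ k, (c i j k) ^ 2) * ∑ j, ∑ k, (q j * q k) ^ 2 := this
        _ = (∑ j, ∑ k, (c i j k) ^ 2) * (‖q‖ ^ 2) ^ 2 := by rw [e2]
    have hnsq : ‖F‖ ^ 2 ≤ (cmax * ‖q‖ ^ 2) ^ 2 := by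
      have : ‖F‖ ^ 2 = ∑ i, (∑ j, ∑ k, c i j k * q j * q k) ^ 2 := by
        rw [EuclideanSpace.norm_eq, Real.sq_sqrt (by positivity)]
        simp [hF, Real.norm_eq_abs, sq_abs]
      rw [this]
      calc ∑ i, (∑ j, ∑ k, c i j k * q j * q k) ^ 2
          ≤ ∑ i, (∑ j, ∑ k, (c i j k) ^ 2) * (‖q‖ ^ 2) ^ 2 :=
            Finset.sum_le_sum fun i _ => hFi i
        _ = (∑ i, ∑ j, ∑ k, (c i j k) ^ 2) * (‖q‖ ^ 2) ^ 2 := by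
            rw [Finset.sum_mul]
        _ ≤ cmax ^ 2 * (‖q‖ ^ 2) ^ 2 := by nlinarith [sq_nonneg (‖q‖ ^ 2)]
        _ = (cmax * ‖q‖ ^ 2) ^ 2 := by ring
    have h2 : (0:ℝ) ≤ cmax * ‖q‖ ^ 2 := by positivity
    nlinarith [norm_nonneg F]
  have hT1 : ⟪q, F⟫ ≤ cmax * ‖q‖ ^ 3 := by
    calc ⟪q, F⟫ ≤ ‖q‖ * ‖F‖ := real_inner_le_norm q F
      _ ≤ ‖q‖ * (cmax * ‖q‖ ^ 2) := by
          exact mul_le_mul_of_nonneg_left hFnorm (norm_nonneg q)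
      _ = cmax * ‖q‖ ^ 3 := by ring
  -- bound on the closure term
  have hT3 : ⟪q, Matrix.toEuclideanLin (Matrix.diagonal fun i => D i i) q⟫ ≤ dmax * ‖q‖ ^ 2 := by
    have : ⟪q, Matrix.toEuclideanLin (Matrix.diagonal fun i => D i i) q⟫
        = ∑ i, D i i * q i ^ 2 := by
      simp [PiLp.inner_apply, Matrix.toEuclideanLin_apply, Matrix.mulVec_diagonal]
      congr 1 with i
      ring
    rw [this, ← hS, Finset.mul_sum]
    refine Finset.sum_le_sum fun i _ => ?_
    have hle : D i i ≤ dmax := Finset.le_sup' (fun i => D i i) (Finset.mem_univ i)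
    nlinarith [sq_nonneg (q i)]
  have hT2 : ⟪q, Matrix.toEuclideanLin D q⟫ < 0 := hneg q hq0
  -- split the inner product
  rw [inner_add_right, inner_add_right, real_inner_smul_right, real_inner_smul_right]
  have hK : 0 < μnl * cmax * ‖q‖ ^ 2 := by positivity
  have hfac : 1 + μnl * dmax * ‖q‖ < 0 := by
    have := (div_lt_iff₀ hpos).mp hq
    nlinarith
  have hmain : cmax * ‖q‖ ^ 3 + (μnl * cmax * ‖q‖ ^ 2) * (dmax * ‖q‖ ^ 2) < 0 := by
    have h3 : 0 < cmax * ‖q‖ ^ 3 := by positivity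
    nlinarith
  have hT3' : (μnl * cmax * ‖q‖ ^ 2) * ⟪q, Matrix.toEuclideanLin (Matrix.diagonal fun i => D i i) q⟫
      ≤ (μnl * cmax * ‖q‖ ^ 2) * (dmax * ‖q‖ ^ 2) :=
    mul_le_mul_of_nonneg_left hT3 (le_of_lt hK)
  nlinarith
end
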